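/- Let Δ_1, …, Δ_r be intervals of the real line whose interiors are pairwise disjoint, and for each j let w_j be a nonnegative integrable weight function on Δ_j that is positive on a set of positive measure, with all moments ∫_{Δ_j} |x|^k w_j(x) dx finite. Let n_1, …, n_r be nonnegative integers and let P be a monic real polynomial of degree |n| = n_1 + ⋯ + n_r such that ∫_{Δ_j} P(x) x^k w_j(x) dx = 0 for all k = 0, 1, …, n_j − 1 and all j = 1, …, r. Then P factors as a product of r polynomials q_{n_1} ⋯ q_{n_r}, where each q_{n_j} is monic of degree n_j and has exactly n_j zeros, all lying in Δ_j; equivalently, P has exactly n_j simple zeros in each interval Δ_j. -/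

import Mathlib

open MeasureTheory Polynomial


private lemma sign_aux (I : Set ℝ) (hI : I.OrdConnected) :
    ∀ (d : ℕ) (f : Polynomial ℝ), f.natDegree = d → f ≠ 0 →
      (∀ x ∈ I, f.IsRoot x → Even (f.rootMultiplicity x)) →
      ∀ a ∈ I, ∀ b ∈ I, 0 ≤ f.eval a * f.eval b := by
  intro d
  induction d using Nat.strong_induction_on with
  | _ d ih =>
    intro f hfd hf0 hroots a ha b hb
    by_contra hneg
    push_neg at hneg
    obtain ⟨u, v, hu, hv, huv, hprod⟩ :
        ∃ u v, u ∈ I ∧ v ∈ I ∧ u ≤ v ∧ f.eval u * f.eval v < 0 := by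
      rcases le_total a b with h | h
      · exact ⟨a, b, ha, hb, h, hneg⟩
      · exact ⟨b, a, hb, ha, h, by rw [mul_comm]; exact hneg⟩
    obtain ⟨z, hz1, hz2⟩ : ∃ z ∈ Set.Ioo u v, f.eval z = 0 := by
      rcases mul_neg_iff.1 hprod with ⟨hp1, hp2⟩ | ⟨hp1, hp2⟩
      · obtain ⟨z, hz, hz0⟩ := intermediate_value_Ioo' huv
          (f.continuousOn (s := Set.Icc u v)) ⟨hp2, hp1⟩
        exact ⟨z, hz, hz0⟩
      · obtain ⟨z, hz, hz0⟩ := intermediate_value_Ioo huv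
          (f.continuousOn (s := Set.Icc u v)) ⟨hp1, hp2⟩
        exact ⟨z, hz, hz0⟩
    have hzI : z ∈ I := hI.out hu hv ⟨hz1.1.le, hz1.2.le⟩
    set m := f.rootMultiplicity z with hm
    have hmeven : Even m := hroots z hzI hz2
    have hmpos : 0 < m := (rootMultiplicity_pos hf0).2 hz2
    obtain ⟨g, hfg, hnd⟩ := f.exists_eq_pow_rootMultiplicity_mul_and_not_dvd hf0 z
    have hgz : g.eval z ≠ 0 := fun h => hnd (dvd_iff_isRoot.2 h)
    have hg0 : g ≠ 0 := fun h => hgz (by simp [h])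
    have hXz : ((X - C z) ^ m : Polynomial ℝ) ≠ 0 := ((monic_X_sub_C z).pow m).ne_zero
    have hdeg : g.natDegree < d := by
      have hd : f.natDegree = m + g.natDegree := by
        rw [hfg, natDegree_mul hXz hg0, natDegree_pow, natDegree_X_sub_C, mul_one]
      omega
    have hgroots : ∀ x ∈ I, g.IsRoot x → Even (g.rootMultiplicity x) := by
      intro x hx hgx
      by_cases hxz : x = z
      · exact absurd (hxz ▸ hgx) hgz
      · have h1 : f.rootMultiplicity x
            = ((X - C z) ^ m).rootMultiplicity x + g.rootMultiplicity x := by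
          conv_lhs => rw [hfg]
          exact rootMultiplicity_mul (by rw [← hfg]; exact hf0)
        have h2 : ((X - C z) ^ m).rootMultiplicity x = 0 := by
          apply rootMultiplicity_eq_zero
          simp only [IsRoot, eval_pow, eval_sub, eval_X, eval_C]
          exact pow_ne_zero _ (sub_ne_zero.2 hxz)
        have h3 : f.IsRoot x := by
          rw [hfg]; simp only [IsRoot, eval_mul]
          rw [hgx, mul_zero]
        have := hroots x hx h3
        rwa [h1, h2, zero_add] at this
    have hga := ih g.natDegree hdeg g rfl hg0 hgroots a ha b hb
    have hfa : f.eval a = (a - z) ^ m * g.eval a := by rw [hfg]; simp [hm]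
    have hfb : f.eval b = (b - z) ^ m * g.eval b := by rw [hfg]; simp [hm]
    have h1 : (0:ℝ) ≤ (a - z) ^ m := hmeven.pow_nonneg _
    have h2 : (0:ℝ) ≤ (b - z) ^ m := hmeven.pow_nonneg _
    rw [hfa, hfb] at hneg
    nlinarith [mul_nonneg (mul_nonneg h1 h2) hga]

private lemma integrableOn_poly_mul {Δ : Set ℝ} (hΔm : MeasurableSet Δ) {w : ℝ → ℝ}
    (hw_nonneg : ∀ x ∈ Δ, 0 ≤ w x)
    (hmom : ∀ k : ℕ, IntegrableOn (fun x => |x| ^ k * w x) Δ)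
    (p : Polynomial ℝ) : IntegrableOn (fun x => p.eval x * w x) Δ := by
  have hwae : AEStronglyMeasurable w (volume.restrict Δ) := by
    have := (hmom 0).aestronglyMeasurable
    simpa using this
  have hk : ∀ k : ℕ, IntegrableOn (fun x => x ^ k * w x) Δ := by
    intro k
    refine Integrable.mono' (hmom k) ((continuous_pow k).aestronglyMeasurable.mul hwae) ?_
    filter_upwards [ae_restrict_mem hΔm] with x hx
    rw [Real.norm_eq_abs, abs_mul, abs_pow, abs_of_nonneg (hw_nonneg x hx)]
  have heq : (fun x => p.eval x * w x) =
      fun x => ∑ k ∈ Finset.range (p.natDegree + 1), p.coeff k * (x ^ k * w x) := by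
    funext x
    rw [Polynomial.eval_eq_sum_range, Finset.sum_mul]
    exact Finset.sum_congr rfl fun k _ => by ring
  rw [heq]
  exact integrable_finset_sum _ fun k _ => (hk k).const_mul _

private lemma sign_aux' (I : Set ℝ) (hI : I.OrdConnected)
    (f : Polynomial ℝ) (hf0 : f ≠ 0)
    (hroots : ∀ x ∈ I, f.IsRoot x → Even (f.rootMultiplicity x)) :
    ∀ a ∈ I, ∀ b ∈ I, 0 ≤ f.eval a * f.eval b :=
  sign_aux I hI f.natDegree f rfl hf0 hroots

private lemma integrableOn_poly_mul' {Δ : Set ℝ} (hΔm : MeasurableSet Δ) {w : ℝ → ℝ}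
    (hw_nonneg : ∀ x ∈ Δ, 0 ≤ w x)
    (hmom : ∀ k : ℕ, IntegrableOn (fun x => |x| ^ k * w x) Δ)
    (p : Polynomial ℝ) : IntegrableOn (fun x => p.eval x * w x) Δ :=
  integrableOn_poly_mul hΔm hw_nonneg hmom p

/-- **Angelesco systems**: the type II multiple orthogonal polynomial factors as a
product of `r` polynomials, where the `j`-th factor is monic of degree `n j` and has
exactly `n j` zeros, all simple and all lying in `Δ j`. -/
theorem stmt_0 (r : ℕ) (Δ : Fin r → Set ℝ)
    (hΔ : ∀ j, (Δ j).OrdConnected)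
    (hdisj : Pairwise fun i j => Disjoint (interior (Δ i)) (interior (Δ j)))
    (w : Fin r → ℝ → ℝ)
    (hw_nonneg : ∀ j, ∀ x ∈ Δ j, 0 ≤ w j x)
    (hw_moments : ∀ j (k : ℕ), IntegrableOn (fun x => |x| ^ k * w j x) (Δ j))
    (hw_pos : ∀ j, 0 < volume {x | x ∈ Δ j ∧ 0 < w j x})
    (n : Fin r → ℕ) (P : Polynomial ℝ)
    (hmonic : P.Monic) (hdeg : P.natDegree = ∑ j, n j)
    (horth : ∀ j, ∀ k < n j, ∫ x in Δ j, P.eval x * x ^ k * w j x = 0) :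
    ∃ q : Fin r → Polynomial ℝ,
      P = ∏ j, q j ∧
      ∀ j, (q j).Monic ∧ (q j).natDegree = n j ∧
        Multiset.card (q j).roots = n j ∧ (q j).roots.Nodup ∧
        ∀ x ∈ (q j).roots, x ∈ Δ j := by
  classical
  have hPne : P ≠ 0 := hmonic.ne_zero
  have hΔm : ∀ j, MeasurableSet (Δ j) := fun j => (hΔ j).measurableSet
  -- extended orthogonality
  have horth' : ∀ j (q : Polynomial ℝ), q.natDegree < n j →
      ∫ x in Δ j, P.eval x * q.eval x * w j x = 0 := by
    intro j q hq
    have heq : (fun x => P.eval x * q.eval x * w j x) =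
        fun x => ∑ k ∈ Finset.range (n j), q.coeff k * (P.eval x * x ^ k * w j x) := by
      funext x
      rw [eval_eq_sum_range' hq, Finset.mul_sum, Finset.sum_mul]
      exact Finset.sum_congr rfl fun k _ => by ring
    rw [heq, integral_finset_sum]
    · refine Finset.sum_eq_zero fun k hk => ?_
      rw [integral_const_mul, horth j k (Finset.mem_range.1 hk), mul_zero]
    · intro k _
      have base := integrableOn_poly_mul' (hΔm j) (hw_nonneg j) (hw_moments j) (P * X ^ k)
      have := base.const_mul (q.coeff k)
      simpa using this
  -- the interiors
  have hIconv : ∀ j, Convex ℝ (interior (Δ j)) := fun j => (hΔ j).convex.interior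
  have hIoc : ∀ j, (interior (Δ j)).OrdConnected := fun j => (hIconv j).ordConnected
  have hfr : ∀ j, volume (Δ j \ interior (Δ j)) = 0 := by
    intro j
    refine measure_mono_null (fun x hx => ?_) ((hΔ j).convex.addHaar_frontier volume)
    exact ⟨subset_closure hx.1, hx.2⟩
  -- the sets of odd-multiplicity roots
  set T : Fin r → Finset ℝ := fun j =>
    P.roots.toFinset.filter fun x => x ∈ interior (Δ j) ∧ Odd (P.rootMultiplicity x) with hT
  -- the key lower bound
  have hcard : ∀ j, n j ≤ (T j).card := by
    intro j
    by_contra hlt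
    push_neg at hlt
    set Q : Polynomial ℝ := ∏ x ∈ T j, (X - C x) with hQ
    have hQmonic : Q.Monic := monic_prod_of_monic _ _ fun x _ => monic_X_sub_C x
    have hQroots : Q.roots = (T j).val := by
      rw [hQ, Finset.prod_eq_multiset_prod, roots_multiset_prod_X_sub_C]
    have hQdeg : Q.natDegree = (T j).card := by
      rw [hQ, natDegree_prod_of_monic _ _ fun x _ => monic_X_sub_C x]
      simp [natDegree_X_sub_C]
    set f : Polynomial ℝ := P * Q with hfdef
    have hf0 : f ≠ 0 := (hmonic.mul hQmonic).ne_zero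
    have hQmult : ∀ x : ℝ, Q.rootMultiplicity x = if x ∈ T j then 1 else 0 := by
      intro x
      rw [← count_roots, hQroots]
      split_ifs with hx
      · exact Multiset.count_eq_one_of_mem (T j).nodup hx
      · exact Multiset.count_eq_zero.2 fun h => hx h
    have heven : ∀ x ∈ interior (Δ j), f.IsRoot x → Even (f.rootMultiplicity x) := by
      intro x hx _
      rw [hfdef, rootMultiplicity_mul (hfdef ▸ hf0), hQmult x]
      by_cases hPr : P.IsRoot x
      · by_cases hodd : Odd (P.rootMultiplicity x)
        · have hxT : x ∈ T j := by
            rw [hT]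
            simp only [Finset.mem_filter, Multiset.mem_toFinset]
            exact ⟨(mem_roots hPne).2 hPr, hx, hodd⟩
          rw [if_pos hxT]
          exact hodd.add_one
        · have hxT : x ∉ T j := by
            rw [hT]
            simp only [Finset.mem_filter, Multiset.mem_toFinset]
            tauto
          rw [if_neg hxT, add_zero]
          exact Nat.not_odd_iff_even.1 hodd
      · have hxT : x ∉ T j := by
          rw [hT]
          simp only [Finset.mem_filter, Multiset.mem_toFinset, mem_roots hPne]
          tauto
        rw [if_neg hxT, add_zero, rootMultiplicity_eq_zero hPr]
        exact ⟨0, rfl⟩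
    have hsign := sign_aux' (interior (Δ j)) (hIoc j) f hf0 heven
    -- the integral of f * w over Δ j is zero
    have hint0 : ∫ x in Δ j, f.eval x * w j x = 0 := by
      have := horth' j Q (hQdeg ▸ hlt)
      simpa [hfdef, eval_mul] using this
    have hsetae : Δ j =ᵐ[volume] interior (Δ j) := by
      rw [MeasureTheory.ae_eq_set]
      refine ⟨hfr j, ?_⟩
      have he : interior (Δ j) \ Δ j = ∅ := Set.diff_eq_empty.2 interior_subset
      rw [he]
      exact measure_empty
    have hint0' : ∫ x in interior (Δ j), f.eval x * w j x = 0 := by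
      rw [← setIntegral_congr_set hsetae]
      exact hint0
    -- roots of f are finite
    have hZfin : Set.Finite {x | f.eval x = 0} := f.finite_setOf_isRoot hf0
    set A : Set ℝ := {x | x ∈ Δ j ∧ 0 < w j x} with hA
    by_cases hex : ∃ b₀, b₀ ∈ A ∧ b₀ ∈ interior (Δ j) ∧ f.eval b₀ ≠ 0
    · obtain ⟨b₀, hb₀A, hb₀I, hb₀ne⟩ := hex
      set c : ℝ := f.eval b₀ with hc
      set g : ℝ → ℝ := fun x => c * (f.eval x * w j x) with hg
      have hgint : Integrable g (volume.restrict (interior (Δ j))) := by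
        exact ((integrableOn_poly_mul' (hΔm j) (hw_nonneg j) (hw_moments j) f).mono_set
          interior_subset).const_mul c
      have hgnn : 0 ≤ᵐ[volume.restrict (interior (Δ j))] g := by
        filter_upwards [ae_restrict_mem measurableSet_interior] with x hx
        have h1 : 0 ≤ c * f.eval x := hsign b₀ hb₀I x hx
        have h2 : 0 ≤ w j x := hw_nonneg j x (interior_subset hx)
        calc (0:ℝ) ≤ (c * f.eval x) * w j x := mul_nonneg h1 h2
          _ = g x := by rw [hg]; ring
      have hgzero : g =ᵐ[volume.restrict (interior (Δ j))] 0 := by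
        refine (integral_eq_zero_iff_of_nonneg_ae hgnn hgint).1 ?_
        rw [hg]
        simp only [integral_const_mul, hint0', mul_zero]
      have hBnull : volume ({x | g x ≠ 0} ∩ interior (Δ j)) = 0 := by
        have := hgzero
        rw [Filter.EventuallyEq, ae_iff, Measure.restrict_apply' measurableSet_interior] at this
        simpa using this
      have hAsub : A ⊆ ({x | g x ≠ 0} ∩ interior (Δ j)) ∪ {x | f.eval x = 0}
          ∪ (Δ j \ interior (Δ j)) := by
        intro x hx
        by_cases hxi : x ∈ interior (Δ j)
        · by_cases hxf : f.eval x = 0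
          · exact Or.inl (Or.inr hxf)
          · refine Or.inl (Or.inl ⟨?_, hxi⟩)
            have h1 : 0 ≤ c * f.eval x := hsign b₀ hb₀I x hxi
            have h2 : c * f.eval x ≠ 0 := mul_ne_zero hb₀ne hxf
            have h3 : 0 < c * f.eval x := lt_of_le_of_ne h1 (Ne.symm h2)
            have : 0 < g x := by
              rw [hg]
              calc (0:ℝ) < (c * f.eval x) * w j x := mul_pos h3 hx.2
                _ = c * (f.eval x * w j x) := by ring
            exact ne_of_gt this
        · exact Or.inr ⟨hx.1, hxi⟩
      have : volume A = 0 := by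
        refine measure_mono_null hAsub ?_
        refine measure_union_null (measure_union_null hBnull (hZfin.measure_zero volume)) (hfr j)
      exact absurd this (ne_of_gt (hw_pos j))
    · push_neg at hex
      have hAsub : A ⊆ {x | f.eval x = 0} ∪ (Δ j \ interior (Δ j)) := by
        intro x hx
        by_cases hxi : x ∈ interior (Δ j)
        · exact Or.inl (not_not.1 fun h => h (hex x hx hxi))
        · exact Or.inr ⟨hx.1, hxi⟩
      have : volume A = 0 :=
        measure_mono_null hAsub (measure_union_null (hZfin.measure_zero volume) (hfr j))
      exact absurd this (ne_of_gt (hw_pos j))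
  -- disjointness of the T j
  have hTdisj : ∀ i ∈ (Finset.univ : Finset (Fin r)), ∀ j ∈ Finset.univ, i ≠ j →
      Disjoint (T i) (T j) := by
    intro i _ j _ hij
    rw [Finset.disjoint_left]
    intro x hxi hxj
    rw [hT] at hxi hxj
    simp only [Finset.mem_filter] at hxi hxj
    exact (hdisj hij).le_bot ⟨hxi.2.1, hxj.2.1⟩
  set U : Finset ℝ := Finset.univ.biUnion T with hU
  have hUsub : U ⊆ P.roots.toFinset := by
    intro x hx
    rw [hU, Finset.mem_biUnion] at hx
    obtain ⟨j, _, hxj⟩ := hx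
    exact (Finset.filter_subset _ _) hxj
  have hUcard : U.card = ∑ j, (T j).card := Finset.card_biUnion hTdisj
  have hchain1 : ∑ j, n j ≤ ∑ j, (T j).card := Finset.sum_le_sum fun j _ => hcard j
  have hchain2 : U.card ≤ P.roots.toFinset.card := Finset.card_le_card hUsub
  have hchain3 : P.roots.toFinset.card ≤ Multiset.card P.roots := Multiset.toFinset_card_le _
  have hchain4 : Multiset.card P.roots ≤ P.natDegree := P.card_roots'
  have hTn : ∀ j, (T j).card = n j := by
    by_contra hcon
    push_neg at hcon
    obtain ⟨j, hj⟩ := hcon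
    have hjlt : n j < (T j).card := lt_of_le_of_ne (hcard j) (Ne.symm hj)
    have : ∑ j, n j < ∑ j, (T j).card :=
      Finset.sum_lt_sum (fun i _ => hcard i) ⟨j, Finset.mem_univ j, hjlt⟩
    omega
  have hsumT : ∑ j, (T j).card = ∑ j, n j := Finset.sum_congr rfl fun j _ => hTn j
  have hcardroots : Multiset.card P.roots = P.natDegree := by omega
  have hUeq : U = P.roots.toFinset := by
    refine Finset.eq_of_subset_of_card_le hUsub ?_
    omega
  have hnodup : P.roots.Nodup := by
    rw [← Multiset.dedup_eq_self]
    refine Multiset.eq_of_le_of_card_le (Multiset.dedup_le _) ?_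
    have : Multiset.card P.roots.dedup = P.roots.toFinset.card := rfl
    omega
  -- split P
  have hsplit : P = (P.roots.map fun a => X - C a).prod :=
    (prod_multiset_X_sub_C_of_monic_of_roots_card_eq hmonic hcardroots).symm
  refine ⟨fun j => ∏ x ∈ T j, (X - C x), ?_, ?_⟩
  · calc P = (P.roots.map fun a => X - C a).prod := hsplit
      _ = ∏ x ∈ P.roots.toFinset, (X - C x) := by
          rw [Finset.prod_eq_multiset_prod]
          congr 1
          rw [Multiset.toFinset_val, Multiset.dedup_eq_self.2 hnodup]
      _ = ∏ x ∈ U, (X - C x) := by rw [hUeq]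
      _ = ∏ j, ∏ x ∈ T j, (X - C x) := Finset.prod_biUnion hTdisj
  · intro j
    have hroots : (∏ x ∈ T j, (X - C x : Polynomial ℝ)).roots = (T j).val := by
      rw [Finset.prod_eq_multiset_prod, roots_multiset_prod_X_sub_C]
    refine ⟨monic_prod_of_monic _ _ fun x _ => monic_X_sub_C x, ?_, ?_, ?_, ?_⟩
    · rw [natDegree_prod_of_monic _ _ fun x _ => monic_X_sub_C x]
      simp [natDegree_X_sub_C, hTn j]
    · rw [hroots]
      exact hTn j
    · rw [hroots]
      exact (T j).nodup
    · intro x hx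
      rw [hroots] at hx
      have : x ∈ T j := hx
      rw [hT] at this
      simp only [Finset.mem_filter] at this
      exact interior_subset this.2.1
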